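/- Let M be a Hurwitz stable Metzler matrix and C, G nonnegative matrices. For γ > 0, the following are equivalent: (i) there exists v ∈ ℝ₊₊ⁿ such that vᵀM + 𝟙ᵀC < 0 entrywise and vᵀG ≤ γ𝟙ᵀ entrywise; (ii) every column sum of −C M⁻¹ G is strictly less than γ. -/

import Mathlib

open Matrix


namespace Stmt10Aux

variable {n : ℕ}

lemma mul_entry_nonneg {l m p : Type*} [Fintype m] {A : Matrix l m ℝ} {B : Matrix m p ℝ}
    (hA : ∀ i j, 0 ≤ A i j) (hB : ∀ i j, 0 ≤ B i j) : ∀ i j, 0 ≤ (A * B) i j := fun i j => by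
  rw [Matrix.mul_apply]
  exact Finset.sum_nonneg fun k _ => mul_nonneg (hA i k) (hB k j)

lemma pow_entry_nonneg {A : Matrix (Fin n) (Fin n) ℝ} (hA : ∀ i j, 0 ≤ A i j) (k : ℕ) :
    ∀ i j, 0 ≤ (A ^ k) i j := by
  induction k with
  | zero => intro i j; rw [pow_zero]; by_cases h : i = j <;> simp [Matrix.one_apply, h]
  | succ m ih => rw [pow_succ]; exact mul_entry_nonneg ih hA

section Norm
attribute [local instance] Matrix.linftyOpNormedAddCommGroup Matrix.linftyOpNormedRing
  Matrix.linftyOpNormedSpace Matrix.linftyOpNormedAlgebra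

lemma entry_le_norm (A : Matrix (Fin n) (Fin n) ℝ) (i j : Fin n) : ‖A i j‖ ≤ ‖A‖ := by
  rw [← coe_nnnorm, ← coe_nnnorm, NNReal.coe_le_coe, Matrix.linfty_opNNNorm_def]
  calc ‖A i j‖₊ ≤ ∑ k, ‖A i k‖₊ :=
        Finset.single_le_sum (f := fun k => ‖A i k‖₊) (fun _ _ => zero_le) (Finset.mem_univ j)
    _ ≤ _ := Finset.le_sup (f := fun i => ∑ k, ‖A i k‖₊) (Finset.mem_univ i)

/-- The entry map as a continuous linear map (w.r.t. the linfty operator norm). -/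
noncomputable def entryCLM (i j : Fin n) : Matrix (Fin n) (Fin n) ℝ →L[ℝ] ℝ :=
  LinearMap.mkContinuous
    { toFun := fun A => A i j
      map_add' := fun _ _ => rfl
      map_smul' := fun _ _ => rfl } 1
    (fun A => by rw [one_mul]; exact entry_le_norm A i j)

lemma geom_inv_nonneg (B : Matrix (Fin n) (Fin n) ℝ) (hB : ∀ i j, 0 ≤ B i j) (h : ‖B‖ < 1) :
    IsUnit (1 - B) ∧ ∀ i j, 0 ≤ (Ring.inverse (1 - B)) i j := by
  refine ⟨isUnit_one_sub_of_norm_lt_one h, fun i j => ?_⟩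
  rw [← geom_series_eq_inverse B h]
  have hs : Summable fun k : ℕ => B ^ k := summable_geometric_of_norm_lt_one h
  have : (entryCLM i j) (∑' k : ℕ, B ^ k) = ∑' k : ℕ, (entryCLM i j) (B ^ k) :=
    (entryCLM i j).map_tsum hs
  show 0 ≤ (entryCLM i j) (∑' k : ℕ, B ^ k)
  rw [this]
  exact tsum_nonneg fun k => pow_entry_nonneg hB k i j

lemma perturb (X : Matrix (Fin n) (Fin n) ℝ) (hdet : IsUnit X.det)
    (hX : ∀ i j, 0 ≤ X⁻¹ i j) :
    ∃ δ > 0, ∀ Y : Matrix (Fin n) (Fin n) ℝ, (∀ i j, 0 ≤ Y i j) → (∀ i j, Y i j < δ) →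
      IsUnit (X - Y).det ∧ ∀ i j, 0 ≤ (X - Y)⁻¹ i j := by
  refine ⟨(n * ‖X⁻¹‖ + 1)⁻¹, by positivity, fun Y hY0 hYδ => ?_⟩
  set δ : ℝ := (n * ‖X⁻¹‖ + 1)⁻¹ with hδ
  have hδpos : 0 < δ := by positivity
  have hnormY : ‖Y‖ ≤ n * δ := by
    have key : ‖Y‖₊ ≤ δ.toNNReal * n := by
      rw [Matrix.linfty_opNNNorm_def]
      apply Finset.sup_le
      intro i _
      calc (∑ j, ‖Y i j‖₊) ≤ ∑ _j : Fin n, δ.toNNReal :=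
            Finset.sum_le_sum fun j _ => by
              rw [← NNReal.coe_le_coe, coe_nnnorm, Real.norm_eq_abs,
                abs_of_nonneg (hY0 i j), Real.coe_toNNReal δ hδpos.le]
              exact (hYδ i j).le
        _ = δ.toNNReal * n := by simp [Finset.sum_const, mul_comm]
    have := (NNReal.coe_le_coe.mpr key)
    rw [coe_nnnorm] at this
    push_cast [Real.coe_toNNReal δ hδpos.le] at this
    linarith
  have hB : ‖X⁻¹ * Y‖ < 1 := by
    calc ‖X⁻¹ * Y‖ ≤ ‖X⁻¹‖ * ‖Y‖ := Matrix.linfty_opNorm_mul _ _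
      _ ≤ ‖X⁻¹‖ * (n * δ) := by
          have := norm_nonneg (X⁻¹); nlinarith [hnormY]
      _ < 1 := by
          have hpos : (0:ℝ) < n * ‖X⁻¹‖ + 1 := by positivity
          have heq : ‖X⁻¹‖ * (n * δ) = (n * ‖X⁻¹‖) / (n * ‖X⁻¹‖ + 1) := by
            rw [hδ, div_eq_mul_inv]; ring
          rw [heq, div_lt_one hpos]; linarith
  set B := X⁻¹ * Y with hBdef
  have hBent : ∀ i j, 0 ≤ B i j := mul_entry_nonneg hX hY0
  obtain ⟨hunit, hinvnn⟩ := geom_inv_nonneg B hBent hB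
  have hXY : X - Y = X * (1 - B) := by
    rw [mul_sub, mul_one, hBdef, ← Matrix.mul_assoc, Matrix.mul_nonsing_inv X hdet, Matrix.one_mul]
  have hdet1B : IsUnit (1 - B).det := (Matrix.isUnit_iff_isUnit_det _).mp hunit
  have hdetXY : IsUnit (X - Y).det := by
    rw [hXY, Matrix.det_mul]
    exact hdet.mul hdet1B
  have hinv_eq : (X - Y)⁻¹ = (1 - B)⁻¹ * X⁻¹ := by
    apply Matrix.inv_eq_right_inv
    rw [hXY, Matrix.mul_assoc, ← Matrix.mul_assoc (1 - B), Matrix.mul_nonsing_inv _ hdet1B,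
      Matrix.one_mul, Matrix.mul_nonsing_inv X hdet]
  have h1Binv : ∀ i j, 0 ≤ (1 - B)⁻¹ i j := by
    rw [Matrix.nonsing_inv_eq_ringInverse]
    exact hinvnn
  refine ⟨hdetXY, ?_⟩
  rw [hinv_eq]
  exact mul_entry_nonneg h1Binv hX

end Norm


lemma unit_of_hurwitz (M : Matrix (Fin n) (Fin n) ℝ)
    (hHurwitz : ∀ μ ∈ spectrum ℂ (M.map (algebraMap ℝ ℂ)), μ.re < 0)
    (s : ℝ) (hs : 0 ≤ s) : IsUnit ((s • (1 : Matrix (Fin n) (Fin n) ℝ) - M)).det := by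
  rw [isUnit_iff_ne_zero]
  intro hdet0
  have hmem : (s : ℂ) ∈ spectrum ℂ (M.map (algebraMap ℝ ℂ)) := by
    rw [spectrum.mem_iff]
    intro hunit
    rw [Matrix.isUnit_iff_isUnit_det] at hunit
    have heq : algebraMap ℂ (Matrix (Fin n) (Fin n) ℂ) (s : ℂ) - M.map (algebraMap ℝ ℂ)
        = (s • (1 : Matrix (Fin n) (Fin n) ℝ) - M).map (algebraMap ℝ ℂ) := by
      ext i j
      by_cases h : i = j <;>
        simp [Matrix.map_apply, Matrix.algebraMap_matrix_apply, Matrix.one_apply, h,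
          Matrix.sub_apply, Matrix.smul_apply, smul_eq_mul]
    have hdc : ((s • (1 : Matrix (Fin n) (Fin n) ℝ) - M).map (algebraMap ℝ ℂ)).det
        = algebraMap ℝ ℂ ((s • (1 : Matrix (Fin n) (Fin n) ℝ) - M)).det :=
      (RingHom.map_det (algebraMap ℝ ℂ) _).symm
    rw [heq, hdc, hdet0, map_zero] at hunit
    exact (isUnit_iff_ne_zero.mp hunit) rfl
  have := hHurwitz _ hmem
  simp at this
  linarith



lemma cont_entry (M : Matrix (Fin n) (Fin n) ℝ) (m : ℝ)
    (hm : IsUnit ((m • (1 : Matrix (Fin n) (Fin n) ℝ) - M)).det) (i j : Fin n) :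
    ContinuousAt (fun t : ℝ => ((t • (1 : Matrix (Fin n) (Fin n) ℝ) - M)⁻¹) i j) m := by
  have hfun : (fun t : ℝ => ((t • (1 : Matrix (Fin n) (Fin n) ℝ) - M)⁻¹) i j)
      = fun t : ℝ => ((t • (1 : Matrix (Fin n) (Fin n) ℝ) - M).det)⁻¹
          * (adjugate (t • (1 : Matrix (Fin n) (Fin n) ℝ) - M)) i j := by
    funext t
    rw [Matrix.inv_def, Ring.inverse_eq_inv]
    simp [Matrix.smul_apply, smul_eq_mul]
  rw [hfun]
  have hA : Continuous fun t : ℝ => (t • (1 : Matrix (Fin n) (Fin n) ℝ) - M) := by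
    apply continuous_matrix
    intro a b
    simp only [Matrix.sub_apply, Matrix.smul_apply, Matrix.one_apply, smul_eq_mul]
    exact (continuous_id.mul continuous_const).sub continuous_const
  exact ((hA.matrix_det.continuousAt).inv₀ (isUnit_iff_ne_zero.mp hm)).mul
    ((hA.matrix_adjugate.matrix_elem i j).continuousAt)









lemma smul_inv_nonneg (a : ℝ) (ha : 0 < a) (Z : Matrix (Fin n) (Fin n) ℝ)
    (hdet : IsUnit Z.det) (hZ : ∀ i j, 0 ≤ Z⁻¹ i j) :
    ∀ i j, 0 ≤ ((a • Z)⁻¹) i j := by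
  have h : (a • Z)⁻¹ = a⁻¹ • Z⁻¹ := by
    apply Matrix.inv_eq_right_inv
    rw [Matrix.smul_mul, Matrix.mul_smul, smul_smul, mul_inv_cancel₀ ha.ne', one_smul,
      Matrix.mul_nonsing_inv _ hdet]
  intro i j
  rw [h, Matrix.smul_apply, smul_eq_mul]
  exact mul_nonneg (by positivity) (hZ i j)

lemma inv_nonneg_of_hurwitz (M : Matrix (Fin n) (Fin n) ℝ)
    (hMetzler : ∀ i j, i ≠ j → 0 ≤ M i j)
    (hHurwitz : ∀ μ ∈ spectrum ℂ (M.map (algebraMap ℝ ℂ)), μ.re < 0) :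
    ∀ s : ℝ, 0 ≤ s → ∀ i j, 0 ≤ ((s • (1 : Matrix (Fin n) (Fin n) ℝ) - M)⁻¹) i j := by
  set c : ℝ := 1 + ∑ i, |M i i| with hc
  have hc1 : 1 ≤ c := by
    have : (0:ℝ) ≤ ∑ i, |M i i| := Finset.sum_nonneg fun i _ => abs_nonneg _
    rw [hc]; linarith
  set A : Matrix (Fin n) (Fin n) ℝ := M + c • 1 with hA
  have hAnn : ∀ i j, 0 ≤ A i j := by
    intro i j
    rw [hA, Matrix.add_apply, Matrix.smul_apply, Matrix.one_apply, smul_eq_mul]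
    by_cases h : i = j
    · subst h
      have h1 : |M i i| ≤ ∑ k, |M k k| :=
        Finset.single_le_sum (f := fun k => |M k k|) (fun _ _ => abs_nonneg _) (Finset.mem_univ i)
      have h2 := neg_abs_le (M i i)
      simp only [if_true, mul_one, hc]
      linarith
    · simp only [h, if_false, mul_zero, add_zero]
      exact hMetzler i j h
  set P : ℝ → Prop := fun s => ∀ i j, 0 ≤ ((s • (1 : Matrix (Fin n) (Fin n) ℝ) - M)⁻¹) i j
    with hPdef
  have hid : ∀ s : ℝ, s + c ≠ 0 →
      s • (1 : Matrix (Fin n) (Fin n) ℝ) - M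
        = (s + c) • ((1 : Matrix (Fin n) (Fin n) ℝ) - (s + c)⁻¹ • A) := by
    intro s hs
    rw [smul_sub, smul_smul, mul_inv_cancel₀ hs, one_smul, hA]
    module
  obtain ⟨δ₁, hδ₁pos, hpert1⟩ := perturb (1 : Matrix (Fin n) (Fin n) ℝ)
      (by simp) (by rw [inv_one]; intro i j; by_cases h : i = j <;> simp [Matrix.one_apply, h])
  set K : ℝ := 1 + ∑ i, ∑ j, A i j with hK
  have hKpos : 0 < K := by
    have : (0:ℝ) ≤ ∑ i, ∑ j, A i j :=
      Finset.sum_nonneg fun i _ => Finset.sum_nonneg fun j _ => hAnn i j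
    rw [hK]; linarith
  have hKent : ∀ i j, A i j < K := by
    intro i j
    have h1 : A i j ≤ ∑ jj, A i jj :=
      Finset.single_le_sum (f := fun jj => A i jj) (fun jj _ => hAnn i jj) (Finset.mem_univ j)
    have h2 : (∑ jj, A i jj) ≤ ∑ ii, ∑ jj, A ii jj :=
      Finset.single_le_sum (f := fun ii => ∑ jj, A ii jj)
        (fun ii _ => Finset.sum_nonneg fun jj _ => hAnn ii jj) (Finset.mem_univ i)
    rw [hK]; linarith
  set T : ℝ := K / δ₁ + |c| + 1 with hT
  have hbase : ∀ s : ℝ, T ≤ s → P s := by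
    intro s hsT
    have hKδ₁ : 0 < K / δ₁ := by positivity
    have habs := neg_abs_le c
    have hsc : 0 < s + c := by rw [hT] at hsT; linarith
    have hKδ : K / δ₁ < s + c := by rw [hT] at hsT; linarith
    have hKlt : K < δ₁ * (s + c) := by
      rw [div_lt_iff₀ hδ₁pos] at hKδ; linarith
    have hY0 : ∀ i j, 0 ≤ ((s + c)⁻¹ • A) i j := fun i j => by
      rw [Matrix.smul_apply, smul_eq_mul]
      exact mul_nonneg (by positivity) (hAnn i j)
    have hYδ : ∀ i j, ((s + c)⁻¹ • A) i j < δ₁ := fun i j => by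
      rw [Matrix.smul_apply, smul_eq_mul, ← div_eq_inv_mul]
      exact (div_lt_iff₀ hsc).mpr (by nlinarith [hKent i j])
    obtain ⟨hdetY, hinvY⟩ := hpert1 _ hY0 hYδ
    intro i j
    rw [hid s hsc.ne']
    exact smul_inv_nonneg _ hsc _ hdetY hinvY i j
  intro s₀ hs₀
  by_contra hbad
  set B : Set ℝ := {t | s₀ ≤ t ∧ ¬ P t} with hB
  have hBne : B.Nonempty := ⟨s₀, le_refl _, hbad⟩
  have hBbdd : BddAbove B := by
    refine ⟨T, fun t ht => ?_⟩
    by_contra hlt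
    push_neg at hlt
    exact ht.2 (hbase t hlt.le)
  set m := sSup B with hm
  have hs₀m : s₀ ≤ m := le_csSup hBbdd ⟨le_refl _, hbad⟩
  have hmnn : 0 ≤ m := le_trans hs₀ hs₀m
  have habove : ∀ t, m < t → P t := by
    intro t ht
    by_contra hPt
    exact absurd (le_csSup hBbdd ⟨le_trans hs₀m ht.le, hPt⟩) (not_le.mpr ht)
  have hmdet : IsUnit ((m • (1 : Matrix (Fin n) (Fin n) ℝ) - M)).det :=
    unit_of_hurwitz M hHurwitz m hmnn
  have hPm : P m := by
    intro i j
    have htend : Filter.Tendsto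
        (fun t : ℝ => ((t • (1 : Matrix (Fin n) (Fin n) ℝ) - M)⁻¹) i j)
        (nhdsWithin m (Set.Ioi m))
        (nhds (((m • (1 : Matrix (Fin n) (Fin n) ℝ) - M)⁻¹) i j)) :=
      (cont_entry M m hmdet i j).tendsto.mono_left nhdsWithin_le_nhds
    refine ge_of_tendsto htend ?_
    filter_upwards [self_mem_nhdsWithin] with t ht
    exact habove t ht i j
  obtain ⟨δ, hδpos, hstep⟩ := perturb (m • (1 : Matrix (Fin n) (Fin n) ℝ) - M) hmdet hPm
  obtain ⟨b, hbB, hbgt⟩ := exists_lt_of_lt_csSup hBne (by linarith : m - δ < m)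
  have hbm : b ≤ m := le_csSup hBbdd hbB
  have hY0 : ∀ i j, 0 ≤ ((m - b) • (1 : Matrix (Fin n) (Fin n) ℝ)) i j := fun i j => by
    rw [Matrix.smul_apply, Matrix.one_apply, smul_eq_mul]
    by_cases h : i = j <;> simp [h] <;> linarith
  have hYδ : ∀ i j, ((m - b) • (1 : Matrix (Fin n) (Fin n) ℝ)) i j < δ := fun i j => by
    rw [Matrix.smul_apply, Matrix.one_apply, smul_eq_mul]
    by_cases h : i = j <;> simp [h] <;> linarith
  obtain ⟨hdetb, hinvb⟩ := hstep _ hY0 hYδ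
  apply hbB.2
  intro i j
  have hXY : (m • (1 : Matrix (Fin n) (Fin n) ℝ) - M) - (m - b) • (1 : Matrix (Fin n) (Fin n) ℝ)
      = b • (1 : Matrix (Fin n) (Fin n) ℝ) - M := by module
  rw [← hXY]
  exact hinvb i j

lemma Minv (M : Matrix (Fin n) (Fin n) ℝ)
    (hMetzler : ∀ i j, i ≠ j → 0 ≤ M i j)
    (hHurwitz : ∀ μ ∈ spectrum ℂ (M.map (algebraMap ℝ ℂ)), μ.re < 0) :
    IsUnit M.det ∧ ∀ i j, M⁻¹ i j ≤ 0 := by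
  have h0 := inv_nonneg_of_hurwitz M hMetzler hHurwitz 0 le_rfl
  have hdet0 := unit_of_hurwitz M hHurwitz 0 le_rfl
  rw [zero_smul, zero_sub] at h0 hdet0
  have hMN : M * (-(-M)⁻¹) = 1 := by
    rw [Matrix.mul_neg, ← Matrix.neg_mul, Matrix.mul_nonsing_inv _ hdet0]
  refine ⟨Matrix.isUnit_det_of_right_inverse hMN, ?_⟩
  rw [Matrix.inv_eq_right_inv hMN]
  intro i j
  simp only [Matrix.neg_apply, neg_nonpos]
  exact h0 i j

lemma sum_mul_apply {r s : ℕ} (C : Matrix (Fin r) (Fin n) ℝ) (Y : Matrix (Fin n) (Fin s) ℝ)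
    (j : Fin s) : ∑ i, (C * Y) i j = vecMul (fun k => ∑ i, C i k) Y j := by
  simp only [Matrix.mul_apply, Matrix.vecMul, dotProduct]
  rw [Finset.sum_comm]
  apply Finset.sum_congr rfl
  intro k _
  rw [Finset.sum_mul]

end Stmt10Aux

open Stmt10Aux

/-- for a Hurwitz stable Metzler `M`, nonnegative `C, G`, and `γ > 0`:
there exists `v ≫ 0` with `vᵀM + 𝟙ᵀC < 0` and `vᵀG ≤ γ𝟙ᵀ` entrywise iff every
column sum of `−C M⁻¹ G` is strictly less than `γ`. -/
theorem stmt_10 (n r s : ℕ) (M : Matrix (Fin n) (Fin n) ℝ)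
    (hMetzler : ∀ i j, i ≠ j → 0 ≤ M i j)
    (hHurwitz : ∀ μ ∈ spectrum ℂ (M.map (algebraMap ℝ ℂ)), μ.re < 0)
    (C : Matrix (Fin r) (Fin n) ℝ) (hC : ∀ i j, 0 ≤ C i j)
    (G : Matrix (Fin n) (Fin s) ℝ) (hG : ∀ i j, 0 ≤ G i j)
    (γ : ℝ) (hγ : 0 < γ) :
    (∃ v : Fin n → ℝ, (∀ i, 0 < v i) ∧
        (∀ j, Matrix.vecMul v M j + ∑ i, C i j < 0) ∧
        (∀ j, Matrix.vecMul v G j ≤ γ)) ↔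
      ∀ j, ∑ i, (-(C * M⁻¹ * G)) i j < γ := by
  obtain ⟨hdet, hinv⟩ := Minv M hMetzler hHurwitz
  set w : Fin n → ℝ := fun k => ∑ i, C i k with hw
  have hw0 : ∀ k, 0 ≤ w k := fun k => Finset.sum_nonneg fun i _ => hC i k
  set u : Fin n → ℝ := fun k => -(vecMul w M⁻¹ k) with hu
  have huneg : u = -(vecMul w M⁻¹) := rfl
  have hu0 : ∀ k, 0 ≤ u k := by
    intro k
    rw [hu]
    simp only [neg_nonneg, Matrix.vecMul, dotProduct]
    apply Finset.sum_nonpos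
    intro jj _
    nlinarith [hw0 jj, hinv jj k]
  have hcolsum : ∀ j, ∑ i, (-(C * M⁻¹ * G)) i j = vecMul u G j := by
    intro j
    have h1 : ∑ i, (C * M⁻¹ * G) i j = vecMul (vecMul w M⁻¹) G j := by
      rw [Matrix.mul_assoc, sum_mul_apply, ← Matrix.vecMul_vecMul]
    calc ∑ i, (-(C * M⁻¹ * G)) i j = -∑ i, (C * M⁻¹ * G) i j := by
          simp [Finset.sum_neg_distrib]
      _ = vecMul u G j := by rw [h1, huneg, Matrix.neg_vecMul, Pi.neg_apply]
  constructor
  · rintro ⟨v, hv, h1, h2⟩ j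
    rw [hcolsum j]
    have hulv : ∀ k, u k < v k := by
      intro k
      have hcol : ∃ i, M⁻¹ i k < 0 := by
        have h11 : (M * M⁻¹) k k = 1 := by
          rw [Matrix.mul_nonsing_inv _ hdet, Matrix.one_apply_eq]
        by_contra hno
        push_neg at hno
        have hz : ∀ i, M⁻¹ i k = 0 := fun i => le_antisymm (hinv i k) (hno i)
        rw [Matrix.mul_apply] at h11
        simp [hz] at h11
      obtain ⟨i0, hi0⟩ := hcol
      have key : 0 < ∑ jj, (vecMul v M jj + w jj) * M⁻¹ jj k := by
        apply Finset.sum_pos'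
        · intro jj _
          nlinarith [(h1 jj).le, hinv jj k]
        · exact ⟨i0, Finset.mem_univ i0, mul_pos_of_neg_of_neg (h1 i0) hi0⟩
      have expand : ∑ jj, (vecMul v M jj + w jj) * M⁻¹ jj k = v k - u k := by
        simp only [add_mul]
        rw [Finset.sum_add_distrib]
        have e1 : ∑ jj, vecMul v M jj * M⁻¹ jj k = v k := by
          have hvm : vecMul (vecMul v M) M⁻¹ = v := by
            rw [Matrix.vecMul_vecMul, Matrix.mul_nonsing_inv _ hdet, Matrix.vecMul_one]
          conv_rhs => rw [← hvm]
          simp [Matrix.vecMul, dotProduct]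
        have e2 : ∑ jj, w jj * M⁻¹ jj k = -u k := by
          rw [hu]
          simp [Matrix.vecMul, dotProduct]
        rw [e1, e2]
        ring
      rw [expand] at key
      linarith
    by_cases hzero : ∀ k, G k j = 0
    · have hz : vecMul u G j = 0 := by
        simp [Matrix.vecMul, dotProduct, hzero]
      rw [hz]; exact hγ
    · push_neg at hzero
      obtain ⟨k0, hk0⟩ := hzero
      have hk0pos : 0 < G k0 j := lt_of_le_of_ne (hG k0 j) (Ne.symm hk0)
      have hlt : vecMul u G j < vecMul v G j := by
        simp only [Matrix.vecMul, dotProduct]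
        apply Finset.sum_lt_sum
        · intro k _; exact mul_le_mul_of_nonneg_right (hulv k).le (hG k j)
        · exact ⟨k0, Finset.mem_univ _, mul_lt_mul_of_pos_right (hulv k0) hk0pos⟩
      exact lt_of_lt_of_le hlt (h2 j)
  · intro hcol
    have hcol' : ∀ j, vecMul u G j < γ := fun j => by rw [← hcolsum j]; exact hcol j
    have huM : vecMul u M = -w := by
      rw [huneg, Matrix.neg_vecMul, Matrix.vecMul_vecMul, Matrix.nonsing_inv_mul _ hdet,
        Matrix.vecMul_one]
    set z : Fin n → ℝ := fun k => -(vecMul (fun _ => (1:ℝ)) M⁻¹ k) with hz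
    have hzneg : z = -(vecMul (fun _ => (1:ℝ)) M⁻¹) := rfl
    have hz0 : ∀ k, 0 ≤ z k := by
      intro k
      rw [hz]
      simp only [neg_nonneg, Matrix.vecMul, dotProduct]
      apply Finset.sum_nonpos
      intro jj _
      nlinarith [hinv jj k]
    have hzM : ∀ k, vecMul z M k = -1 := by
      intro k
      rw [hzneg, Matrix.neg_vecMul, Matrix.vecMul_vecMul, Matrix.nonsing_inv_mul _ hdet,
        Matrix.vecMul_one]
      simp
    have hzpos : ∀ k, 0 < z k := by
      intro k
      rcases lt_or_eq_of_le (hz0 k) with h | h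
      · exact h
      · exfalso
        have hge : 0 ≤ vecMul z M k := by
          simp only [Matrix.vecMul, dotProduct]
          apply Finset.sum_nonneg
          intro jj _
          by_cases hjk : jj = k
          · rw [hjk, ← h]; simp
          · exact mul_nonneg (hz0 jj) (hMetzler jj k hjk)
        rw [hzM k] at hge
        linarith
    have hzG0 : ∀ j, 0 ≤ vecMul z G j := by
      intro j
      simp only [Matrix.vecMul, dotProduct]
      exact Finset.sum_nonneg fun k _ => mul_nonneg (hz0 k) (hG k j)
    set h : Fin s → ℝ := fun j => (γ - vecMul u G j) / (vecMul z G j + 1) with hh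
    have hhpos : ∀ j, 0 < h j := fun j =>
      div_pos (by linarith [hcol' j]) (by linarith [hzG0 j])
    obtain ⟨ε, hεpos, hεle⟩ : ∃ ε : ℝ, 0 < ε ∧ ∀ j, ε ≤ h j := by
      classical
      have hFne : (insert (1:ℝ) (Finset.image h Finset.univ)).Nonempty :=
        ⟨1, Finset.mem_insert_self _ _⟩
      refine ⟨(insert (1:ℝ) (Finset.image h Finset.univ)).min' hFne, ?_, ?_⟩
      · rcases Finset.mem_insert.mp (Finset.min'_mem _ hFne) with h1 | h1
        · rw [h1]; norm_num
        · obtain ⟨j, _, hj⟩ := Finset.mem_image.mp h1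
          rw [← hj]; exact hhpos j
      · intro j
        exact Finset.min'_le _ (h j)
          (Finset.mem_insert_of_mem (Finset.mem_image_of_mem h (Finset.mem_univ j)))
    refine ⟨fun k => u k + ε * z k, fun k => ?_, fun j => ?_, fun j => ?_⟩
    · exact add_pos_of_nonneg_of_pos (hu0 k) (mul_pos hεpos (hzpos k))
    · have hvM : vecMul (fun k => u k + ε * z k) M j = vecMul u M j + ε * vecMul z M j := by
        simp only [Matrix.vecMul, dotProduct]
        rw [Finset.mul_sum, ← Finset.sum_add_distrib]
        apply Finset.sum_congr rfl
        intro k _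
        ring
      have hwj : (∑ i, C i j) = w j := rfl
      rw [hwj, hvM, huM, hzM j, Pi.neg_apply]
      linarith
    · have hvG : vecMul (fun k => u k + ε * z k) G j = vecMul u G j + ε * vecMul z G j := by
        simp only [Matrix.vecMul, dotProduct]
        rw [Finset.mul_sum, ← Finset.sum_add_distrib]
        apply Finset.sum_congr rfl
        intro k _
        ring
      rw [hvG]
      have hd : 0 < vecMul z G j + 1 := by linarith [hzG0 j]
      have hms : ε * (vecMul z G j + 1) ≤ γ - vecMul u G j := by
        calc ε * (vecMul z G j + 1) ≤ h j * (vecMul z G j + 1) :=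
              mul_le_mul_of_nonneg_right (hεle j) hd.le
          _ = γ - vecMul u G j := div_mul_cancel₀ _ hd.ne'
      nlinarith
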